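/- arXiv:0811.3774 — 6 statements merged into one kernel-verified Lean document; each statement's English description precedes it below -/
import Mathlib

section
/- Every G-structured F-algebra has exactly |G| automorphisms (as a G-structured algebra). -/
/-- An idempotent `e` of a commutative ring is primitive if it is nonzero and cannot be
properly refined: any idempotent below it is `0` or `e` itself. -/
def IsPrimitiveIdempotent {R : Type*} [CommRing R] (e : R) : Prop :=
  IsIdempotentElem e ∧ e ≠ 0 ∧
    ∀ f : R, IsIdempotentElem f → f * e = f → f = 0 ∨ f = e

/-- A `G`-structured `F`-algebra: an étale `F`-algebra of degree `|G|` together with an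
inclusion of `G` into its `F`-algebra automorphisms acting transitively on the primitive
idempotents. -/
structure GStructuredAlgebra (F : Type) [Field F] (G : Type) [CommGroup G] [Finite G] where
  carrier : Type
  [isCommRing : CommRing carrier]
  [isAlgebra : Algebra F carrier]
  etale : Algebra.Etale F carrier
  finrank_eq : Module.finrank F carrier = Nat.card G
  action : G →* (carrier ≃ₐ[F] carrier)
  action_injective : Function.Injective action
  transitive : ∀ e e' : carrier, IsPrimitiveIdempotent e → IsPrimitiveIdempotent e' →
    ∃ g : G, action g e = e'

attribute [instance] GStructuredAlgebra.isCommRing GStructuredAlgebra.isAlgebra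

theorem IsPrimitiveIdempotent.map {R S : Type*} [CommRing R] [CommRing S] (σ : R ≃+* S)
    {x : R} (h : IsPrimitiveIdempotent x) : IsPrimitiveIdempotent (σ x) := by
  obtain ⟨h1, h2, h3⟩ := h
  refine ⟨?_, ?_, ?_⟩
  · show σ x * σ x = σ x
    rw [← map_mul, h1]
  · intro hx
    exact h2 (by simpa using σ.injective (hx.trans (map_zero σ).symm))
  · intro f hf hfx
    have h1' : IsIdempotentElem (σ.symm f) := by
      show _ * _ = _
      rw [← map_mul, hf]
    have h2' : σ.symm f * x = σ.symm f := by
      apply σ.injective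
      rw [map_mul, σ.apply_symm_apply, hfx]
    rcases h3 _ h1' h2' with h | h
    · left
      have := congrArg σ h
      simpa using this
    · right
      have := congrArg σ h
      simpa using this


theorem autCardLe (F K : Type) [Field F] [Field K] [Algebra F K] [FiniteDimensional F K] :
    Nat.card (K ≃ₐ[F] K) ≤ Module.finrank F K := by
  rw [Nat.card_eq_fintype_card]
  calc Fintype.card (K ≃ₐ[F] K) ≤ Fintype.card (K →ₐ[F] K) :=
        Fintype.card_le_of_injective _ AlgEquiv.coe_algHom_injective
  _ ≤ Module.finrank K (K →ₗ[F] K) := finrank_algHom F K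
  _ = Module.finrank F K := Module.finrank_linearMap_self F K K

set_option maxHeartbeats 1000000 in
set_option synthInstance.maxHeartbeats 400000 in
open Module in
theorem aux (F : Type) [Field F] (G : Type) [CommGroup G] [Finite G]
    (L : Type) [CommRing L] [Algebra F L] (het : Algebra.Etale F L)
    (hrank : Module.finrank F L = Nat.card G)
    (ρ : G →* (L ≃ₐ[F] L)) (hρinj : Function.Injective ρ)
    (htrans : ∀ e e' : L, IsPrimitiveIdempotent e → IsPrimitiveIdempotent e' →
      ∃ g : G, ρ g e = e') :
    Nat.card {σ : L ≃ₐ[F] L // ∀ (g : G) (x : L), σ (ρ g x) = ρ g (σ x)} = Nat.card G := by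
  classical
  have h1 := het.formallyEtale
  have h2 := het.finitePresentation
  have hfin : Module.Finite F L := Algebra.FormallyUnramified.finite_of_free F L
  have hred : IsReduced L := Algebra.FormallyUnramified.isReduced_of_field F L
  have hart : IsArtinianRing L := isArtinian_of_tower F inferInstance
  have hGpos : 0 < Nat.card G := Nat.card_pos
  have hnontriv : Nontrivial L := by
    rcases subsingleton_or_nontrivial L with h | h
    · exfalso
      rw [finrank_zero_of_subsingleton] at hrank
      omega
    · exact h
  letI : Fintype {I : Ideal L | I.IsMaximal} :=
    @Fintype.ofFinite _ (IsArtinianRing.setOfPred_isMaximal_finite L).to_subtype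
  letI instF : ∀ I : {I : Ideal L | I.IsMaximal}, Field (L ⧸ I.1) :=
    fun I => @Ideal.Quotient.field L _ I.1 I.2
  -- the algebra isomorphism with the product of residue fields
  let π : L ≃ₐ[F] ((I : {I : Ideal L | I.IsMaximal}) → L ⧸ I.1) :=
    AlgEquiv.ofRingEquiv (f := (IsArtinianRing.equivPi L).toRingEquiv.trans
      (RingEquiv.piCongrLeft' (fun I : MaximalSpectrum L => L ⧸ I.asIdeal)
        (⟨fun I => ⟨I.asIdeal, I.isMaximal⟩, fun I => ⟨I.1, I.2⟩, fun _ => rfl, fun _ => rfl⟩ :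
          MaximalSpectrum L ≃ {I : Ideal L | I.IsMaximal}))) (fun r => rfl)
  have hπ : ∀ (x : L) (I : {I : Ideal L | I.IsMaximal}), π x I = Ideal.Quotient.mk I.1 x :=
    fun x I => rfl
  -- the primitive idempotents
  let e : {I : Ideal L | I.IsMaximal} → L := fun I => π.symm (Pi.single I 1)
  have he : ∀ I, π (e I) = Pi.single I 1 := fun I => π.apply_symm_apply _
  have h_idem : ∀ I, IsIdempotentElem (e I) := by
    intro I
    show e I * e I = e I
    apply π.injective
    rw [map_mul, he, ← Pi.single_mul, one_mul]
  have h_ne : ∀ I, e I ≠ 0 := by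
    intro I hI
    have := congrFun ((he I).symm.trans (by rw [hI, map_zero])) I
    simp at this
  have h_orth : ∀ I J, I ≠ J → e I * e J = 0 := by
    intro I J hIJ
    apply π.injective
    rw [map_mul, he, he, map_zero]
    funext k
    by_cases hk : k = I
    · subst hk
      simp [Pi.single_apply, Ne.symm hIJ]
    · simp [Pi.single_apply, hk]
  have h_sum : ∑ I, e I = 1 := by
    apply π.injective
    rw [map_sum, map_one]
    simp_rw [he]
    have := Finset.univ_sum_single (1 : (I : {I : Ideal L | I.IsMaximal}) → L ⧸ I.1)
    simpa using this
  have h_mem : ∀ (I : {I : Ideal L | I.IsMaximal}) (x : L), x ∈ I.1 ↔ x * e I = 0 := by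
    intro I x
    constructor
    · intro hx
      apply π.injective
      rw [map_mul, he, map_zero]
      funext k
      by_cases hk : k = I
      · subst hk
        simp only [Pi.mul_apply, Pi.single_eq_same, mul_one, Pi.zero_apply, hπ]
        exact Ideal.Quotient.eq_zero_iff_mem.mpr hx
      · simp [Pi.single_apply, hk]
    · intro hx
      have := congrFun (congrArg (⇑π) hx) I
      rw [map_mul, he, map_zero] at this
      simp only [Pi.mul_apply, Pi.single_eq_same, mul_one, Pi.zero_apply, hπ] at this
      exact Ideal.Quotient.eq_zero_iff_mem.mp this
  have h_prim : ∀ I, IsPrimitiveIdempotent (e I) := by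
    intro I
    refine ⟨h_idem I, h_ne I, ?_⟩
    intro f hf hfe
    have hkey : π f = 0 ∨ π f = Pi.single I 1 := by
      have hsupp : ∀ k, k ≠ I → π f k = 0 := by
        intro k hk
        have := congrFun (congrArg (⇑π) hfe) k
        rw [map_mul, he] at this
        simpa [Pi.single_apply, hk] using this.symm
      have hI : π f I = 0 ∨ π f I = 1 := by
        have h' : IsIdempotentElem (π f I) := by
          show _ = _
          have := congrFun (congrArg (⇑π) hf) I
          rwa [map_mul] at this
        exact IsIdempotentElem.iff_eq_zero_or_one.mp h'
      rcases hI with h | h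
      · left
        funext k
        by_cases hk : k = I
        · subst hk; simpa using h
        · simpa using hsupp k hk
      · right
        funext k
        by_cases hk : k = I
        · subst hk; simpa using h
        · rw [hsupp k hk, Pi.single_eq_of_ne hk]
    rcases hkey with h | h
    · left
      apply π.injective
      rw [h, map_zero]
    · right
      apply π.injective
      rw [h, he]
  have h_primeq : ∀ x : L, IsPrimitiveIdempotent x → ∃ I, x = e I := by
    intro x hx
    obtain ⟨hx1, hx2, hx3⟩ := hx
    by_cases hall : ∀ I, x * e I = 0
    · exfalso
      apply hx2
      calc x = x * 1 := (mul_one x).symm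
      _ = x * ∑ I, e I := by rw [h_sum]
      _ = ∑ I, x * e I := Finset.mul_sum _ _ _
      _ = 0 := by simp [hall]
    · push_neg at hall
      obtain ⟨I, hI⟩ := hall
      have hidem : IsIdempotentElem (x * e I) := by
        show _ = _
        calc x * e I * (x * e I) = (x * x) * (e I * e I) := by ring
        _ = x * e I := by rw [hx1, h_idem I]
      have hle : (x * e I) * x = x * e I := by
        calc x * e I * x = (x * x) * e I := by ring
        _ = x * e I := by rw [hx1]
      rcases hx3 _ hidem hle with h | h
      · exact absurd h hI
      · obtain ⟨hp1, hp2, hp3⟩ := h_prim I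
        have h2 : (x * e I) * e I = x * e I := by
          calc x * e I * e I = x * (e I * e I) := by ring
          _ = x * e I := by rw [h_idem I]
        rcases hp3 _ hidem h2 with h' | h'
        · exact absurd h' hI
        · exact ⟨I, by rw [← h, h']⟩
  -- a fixed maximal ideal
  obtain ⟨M0, hM0⟩ := Ideal.exists_maximal L
  let m0 : {I : Ideal L | I.IsMaximal} := ⟨M0, hM0⟩
  -- an automorphism matching idempotents maps the corresponding maximal ideals to each other
  have hfix_map : ∀ (ψ : L ≃ₐ[F] L) (I J : {I : Ideal L | I.IsMaximal}), ψ (e I) = e J →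
      Ideal.map (ψ : L →+* L) I.1 = J.1 := by
    intro ψ I J hψ
    apply le_antisymm
    · rw [Ideal.map_le_iff_le_comap]
      intro x hx
      show ψ x ∈ J.1
      rw [h_mem]
      calc ψ x * e J = ψ x * ψ (e I) := by rw [hψ]
      _ = ψ (x * e I) := (map_mul ψ x (e I)).symm
      _ = 0 := by rw [(h_mem I x).mp hx, map_zero]
    · intro y hy
      have hmem : ψ.symm y ∈ I.1 := by
        rw [h_mem]
        apply ψ.injective
        rw [map_mul, map_zero, ψ.apply_symm_apply, hψ]
        exact (h_mem J y).mp hy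
      have := Ideal.mem_map_of_mem (ψ : L →+* L) hmem
      simpa using this
  -- all residue fields have the same dimension
  haveI hqfin : ∀ I : {I : Ideal L | I.IsMaximal}, Module.Finite F (L ⧸ I.1) := fun I =>
    Module.Finite.of_surjective (Ideal.Quotient.mkₐ F I.1).toLinearMap
      Ideal.Quotient.mk_surjective
  have hd : ∀ I : {I : Ideal L | I.IsMaximal},
      finrank F (L ⧸ I.1) = finrank F (L ⧸ m0.1) := by
    intro I
    obtain ⟨g, hg⟩ := htrans (e I) (e m0) (h_prim I) (h_prim m0)
    exact (Ideal.quotientEquivAlg I.1 m0.1 (ρ g) (hfix_map (ρ g) I m0 hg).symm).toLinearEquiv.finrank_eq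
  have hcard : Fintype.card {I : Ideal L | I.IsMaximal} * finrank F (L ⧸ m0.1) = Nat.card G := by
    rw [← hrank, π.toLinearEquiv.finrank_eq, Module.finrank_pi_fintype]
    rw [Finset.sum_congr rfl (fun I _ => hd I), Finset.sum_const, smul_eq_mul, Finset.card_univ]
  -- choice functions
  let gOf : L → G := fun x =>
    if h : IsPrimitiveIdempotent x then (htrans (e m0) x (h_prim m0) h).choose else 1
  have hgOf : ∀ x, IsPrimitiveIdempotent x → ρ (gOf x) (e m0) = x := by
    intro x h
    simp only [gOf, dif_pos h]
    exact (htrans (e m0) x (h_prim m0) h).choose_spec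
  let IOf : L → {I : Ideal L | I.IsMaximal} := fun x =>
    if h : IsPrimitiveIdempotent x then (h_primeq x h).choose else m0
  have hIOf : ∀ x, (h : IsPrimitiveIdempotent x) → x = e (IOf x) := by
    intro x h
    simp only [IOf, dif_pos h]
    exact (h_primeq x h).choose_spec
  have hcancel : ∀ (g : G) (x : L), ρ g⁻¹ (ρ g x) = x := by
    intro g x
    rw [← AlgEquiv.mul_apply, ← map_mul, inv_mul_cancel, map_one, AlgEquiv.one_apply]
  have hcancel' : ∀ (g : G) (x : L), ρ g (ρ g⁻¹ x) = x := by
    intro g x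
    rw [← AlgEquiv.mul_apply, ← map_mul, mul_inv_cancel, map_one, AlgEquiv.one_apply]
  -- the subtype of commuting automorphisms
  have hprimσ : ∀ σ : {σ : L ≃ₐ[F] L // ∀ (g : G) (x : L), σ (ρ g x) = ρ g (σ x)},
      IsPrimitiveIdempotent (σ.1 (e m0)) :=
    fun σ => IsPrimitiveIdempotent.map (σ.1 : L ≃+* L) (h_prim m0)
  let σ' : {σ : L ≃ₐ[F] L // ∀ (g : G) (x : L), σ (ρ g x) = ρ g (σ x)} → (L ≃ₐ[F] L) :=
    fun σ => σ.1.trans (ρ (gOf (σ.1 (e m0)))⁻¹)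
  have hσ'app : ∀ σ x, σ' σ x = ρ (gOf (σ.1 (e m0)))⁻¹ (σ.1 x) := fun σ x => rfl
  have hσ'e : ∀ σ, σ' σ (e m0) = e m0 := by
    intro σ
    rw [hσ'app]
    have hy : ρ (gOf (σ.1 (e m0))) (e m0) = σ.1 (e m0) := hgOf _ (hprimσ σ)
    generalize hgg : gOf (σ.1 (e m0)) = g at *
    rw [← hy, hcancel]
  have hσ'comm : ∀ σ (g : G) (x : L), σ' σ (ρ g x) = ρ g (σ' σ x) := by
    intro σ g x
    rw [hσ'app, hσ'app, σ.2]
    conv_lhs => rw [← AlgEquiv.mul_apply, ← map_mul, mul_comm, map_mul, AlgEquiv.mul_apply]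
  let τ : {σ : L ≃ₐ[F] L // ∀ (g : G) (x : L), σ (ρ g x) = ρ g (σ x)} →
      ((L ⧸ m0.1) ≃ₐ[F] (L ⧸ m0.1)) :=
    fun σ => Ideal.quotientEquivAlg m0.1 m0.1 (σ' σ) (hfix_map (σ' σ) m0 m0 (hσ'e σ)).symm
  have hτ : ∀ σ x, τ σ (Ideal.Quotient.mk m0.1 x) = Ideal.Quotient.mk m0.1 (σ' σ x) :=
    fun σ x => rfl
  haveI hFin : Finite ((L ⧸ m0.1) ≃ₐ[F] (L ⧸ m0.1)) :=
    @Finite.of_fintype _ (@AlgEquiv.fintype F (L ⧸ m0.1) _ (instF m0) (Ideal.Quotient.algebra F)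
      (hqfin m0))
  -- the injection
  let Φ : {σ : L ≃ₐ[F] L // ∀ (g : G) (x : L), σ (ρ g x) = ρ g (σ x)} →
      ({I : Ideal L | I.IsMaximal} × ((L ⧸ m0.1) ≃ₐ[F] (L ⧸ m0.1))) :=
    fun σ => (IOf (σ.1 (e m0)), τ σ)
  have hΦinj : Function.Injective Φ := by
    intro σ₁ σ₂ hΦeq
    have hΦ1 : IOf (σ₁.1 (e m0)) = IOf (σ₂.1 (e m0)) := congrArg Prod.fst hΦeq
    have hΦ2 : τ σ₁ = τ σ₂ := congrArg Prod.snd hΦeq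
    have he12 : σ₁.1 (e m0) = σ₂.1 (e m0) := by
      rw [hIOf _ (hprimσ σ₁), hΦ1, ← hIOf _ (hprimσ σ₂)]
    have hg12 : gOf (σ₁.1 (e m0)) = gOf (σ₂.1 (e m0)) := by rw [he12]
    have hkey : ∀ x, σ' σ₁ x * e m0 = σ' σ₂ x * e m0 := by
      intro x
      have h := congrArg (fun t : ((L ⧸ m0.1) ≃ₐ[F] (L ⧸ m0.1)) =>
        t (Ideal.Quotient.mk m0.1 x)) hΦ2
      simp only [hτ] at h
      rw [Ideal.Quotient.eq] at h
      have := (h_mem m0 _).mp h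
      rw [sub_mul, sub_eq_zero] at this
      exact this
    have hall : ∀ x (I : {I : Ideal L | I.IsMaximal}), σ' σ₁ x * e I = σ' σ₂ x * e I := by
      intro x I
      have hgI : ρ (gOf (e I)) (e m0) = e I := hgOf _ (h_prim I)
      have expand : ∀ σ, σ' σ x * e I = ρ (gOf (e I)) (σ' σ (ρ (gOf (e I))⁻¹ x) * e m0) := by
        intro σ
        rw [map_mul, ← hσ'comm, hcancel', hgI]
      rw [expand σ₁, expand σ₂, hkey]
    have hfun : ∀ x, σ' σ₁ x = σ' σ₂ x := by
      intro x
      calc σ' σ₁ x = σ' σ₁ x * ∑ I, e I := by rw [h_sum, mul_one]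
      _ = ∑ I, σ' σ₁ x * e I := Finset.mul_sum _ _ _
      _ = ∑ I, σ' σ₂ x * e I := Finset.sum_congr rfl fun I _ => hall x I
      _ = σ' σ₂ x * ∑ I, e I := (Finset.mul_sum _ _ _).symm
      _ = σ' σ₂ x := by rw [h_sum, mul_one]
    refine Subtype.ext (AlgEquiv.ext fun x => ?_)
    have h1 : σ₁.1 x = ρ (gOf (σ₁.1 (e m0))) (σ' σ₁ x) := by
      rw [hσ'app, hcancel']
    have h2 : σ₂.1 x = ρ (gOf (σ₂.1 (e m0))) (σ' σ₂ x) := by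
      rw [hσ'app, hcancel']
    rw [h1, h2, hfun, hg12]
  -- counting
  haveI : Finite {σ : L ≃ₐ[F] L // ∀ (g : G) (x : L), σ (ρ g x) = ρ g (σ x)} :=
    Finite.of_injective Φ hΦinj
  have hlow : Nat.card G ≤
      Nat.card {σ : L ≃ₐ[F] L // ∀ (g : G) (x : L), σ (ρ g x) = ρ g (σ x)} := by
    have hcomm : ∀ (g : G), ∀ (h : G) (x : L), ρ g (ρ h x) = ρ h (ρ g x) := by
      intro g h x
      rw [← AlgEquiv.mul_apply, ← AlgEquiv.mul_apply, ← map_mul, ← map_mul, mul_comm]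
    have hinj2 : Function.Injective
        (fun g : G => (⟨ρ g, hcomm g⟩ :
          {σ : L ≃ₐ[F] L // ∀ (g : G) (x : L), σ (ρ g x) = ρ g (σ x)})) := by
      intro a b hab
      exact hρinj (congrArg Subtype.val hab)
    exact Nat.card_le_card_of_injective _ hinj2
  have hautle : Nat.card ((L ⧸ m0.1) ≃ₐ[F] (L ⧸ m0.1)) ≤ finrank F (L ⧸ m0.1) :=
    @autCardLe F (L ⧸ m0.1) _ (instF m0) (Ideal.Quotient.algebra F) (hqfin m0)
  have hup : Nat.card {σ : L ≃ₐ[F] L // ∀ (g : G) (x : L), σ (ρ g x) = ρ g (σ x)} ≤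
      Nat.card G := by
    calc Nat.card {σ : L ≃ₐ[F] L // ∀ (g : G) (x : L), σ (ρ g x) = ρ g (σ x)}
        ≤ Nat.card ({I : Ideal L | I.IsMaximal} × ((L ⧸ m0.1) ≃ₐ[F] (L ⧸ m0.1))) :=
          Nat.card_le_card_of_injective Φ hΦinj
    _ = Nat.card {I : Ideal L | I.IsMaximal} * Nat.card ((L ⧸ m0.1) ≃ₐ[F] (L ⧸ m0.1)) :=
          Nat.card_prod _ _
    _ ≤ Nat.card {I : Ideal L | I.IsMaximal} * finrank F (L ⧸ m0.1) :=
          Nat.mul_le_mul_left _ hautle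
    _ = Fintype.card {I : Ideal L | I.IsMaximal} * finrank F (L ⧸ m0.1) := by
          rw [Nat.card_eq_fintype_card]
    _ = Nat.card G := hcard
  omega


/-- Every `G`-structured `F`-algebra has exactly `|G|` automorphisms as a `G`-structured
algebra, i.e. `F`-algebra automorphisms commuting with the `G`-action. -/
theorem stmt2 (F : Type) [Field F] (G : Type) [CommGroup G] [Finite G]
    (L : GStructuredAlgebra F G) :
    Nat.card {σ : L.carrier ≃ₐ[F] L.carrier //
        ∀ (g : G) (x : L.carrier), σ (L.action g x) = L.action g (σ x)} = Nat.card G :=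
  aux F G L.carrier L.etale L.finrank_eq L.action L.action_injective L.transitive
end

section
/- Let A be an event in a probability space with 0 < Pr(A) < 1. Suppose events E₁ and E₂ are independent, are conditionally independent given A, and Pr(E_i | A) ≠ Pr(E_i) for i = 1, 2. Then E₁ and E₂ are not conditionally independent given the complement of A. -/
open MeasureTheory ProbabilityTheory

/-- If `0 < Pr(A) < 1`, `E₁, E₂` are independent, conditionally independent given `A`, and
`Pr(Eᵢ | A) ≠ Pr(Eᵢ)` for `i = 1, 2`, then `E₁` and `E₂` are not conditionally independent
given the complement of `A`. -/
theorem stmt8 {Ω : Type*} [MeasurableSpace Ω] (μ : Measure Ω) [IsProbabilityMeasure μ]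
    (A E₁ E₂ : Set Ω) (hA : MeasurableSet A) (hE₁ : MeasurableSet E₁) (hE₂ : MeasurableSet E₂)
    (hA0 : 0 < μ A) (hA1 : μ A < 1)
    (hind : μ (E₁ ∩ E₂) = μ E₁ * μ E₂)
    (hcond : μ[E₁ ∩ E₂ | A] = μ[E₁ | A] * μ[E₂ | A])
    (hne1 : μ[E₁ | A] ≠ μ E₁) (hne2 : μ[E₂ | A] ≠ μ E₂) :
    μ[E₁ ∩ E₂ | Aᶜ] ≠ μ[E₁ | Aᶜ] * μ[E₂ | Aᶜ] := by
  intro h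
  have hAc : MeasurableSet Aᶜ := hA.compl
  have hsum : μ A + μ Aᶜ = 1 := by
    rw [measure_add_measure_compl hA, measure_univ]
  have hAc0 : μ Aᶜ ≠ 0 := by
    intro h0
    rw [h0, add_zero] at hsum
    exact hA1.ne hsum
  -- real-valued quantities
  set a := (μ A).toReal with ha_def
  set b := (μ Aᶜ).toReal with hb_def
  set p1 := (μ (A ∩ E₁)).toReal with hp1_def
  set p2 := (μ (A ∩ E₂)).toReal with hp2_def
  set q1 := (μ (Aᶜ ∩ E₁)).toReal with hq1_def
  set q2 := (μ (Aᶜ ∩ E₂)).toReal with hq2_def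
  set x := (μ (A ∩ (E₁ ∩ E₂))).toReal with hx_def
  set y := (μ (Aᶜ ∩ (E₁ ∩ E₂))).toReal with hy_def
  set e1 := (μ E₁).toReal with he1_def
  set e2 := (μ E₂).toReal with he2_def
  have ha0 : 0 < a := ENNReal.toReal_pos hA0.ne' (measure_ne_top μ A)
  have hb0 : 0 < b := ENNReal.toReal_pos hAc0 (measure_ne_top μ Aᶜ)
  have hab : a + b = 1 := by
    rw [ha_def, hb_def, ← ENNReal.toReal_add (measure_ne_top μ A) (measure_ne_top μ Aᶜ), hsum]
    simp
  -- splitting lemmas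
  have split : ∀ S : Set Ω, (μ (A ∩ S)).toReal + (μ (Aᶜ ∩ S)).toReal = (μ S).toReal := by
    intro S
    rw [← ENNReal.toReal_add (measure_ne_top _ _) (measure_ne_top _ _)]
    congr 1
    rw [Set.inter_comm A S, Set.inter_comm Aᶜ S, ← Set.diff_eq, measure_inter_add_diff S hA]
  have hs1 : p1 + q1 = e1 := split E₁
  have hs2 : p2 + q2 = e2 := split E₂
  have hs12 : x + y = e1 * e2 := by
    rw [split (E₁ ∩ E₂), he1_def, he2_def, ← ENNReal.toReal_mul, ← hind]
  -- cond on A as real equation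
  have hcondr : a⁻¹ * x = (a⁻¹ * p1) * (a⁻¹ * p2) := by
    have := congrArg ENNReal.toReal hcond
    rw [cond_apply hA, cond_apply hA, cond_apply hA] at this
    simpa [ENNReal.toReal_mul, ENNReal.toReal_inv] using this
  have h1 : a * x = p1 * p2 := by
    field_simp at hcondr
    nlinarith [hcondr, ha0]
  -- cond on Aᶜ as real equation
  have hr : b⁻¹ * y = (b⁻¹ * q1) * (b⁻¹ * q2) := by
    have := congrArg ENNReal.toReal h
    rw [cond_apply hAc, cond_apply hAc, cond_apply hAc] at this
    simpa [ENNReal.toReal_mul, ENNReal.toReal_inv] using this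
  have h2 : b * y = q1 * q2 := by
    field_simp at hr
    nlinarith [hr, hb0]
  -- the non-equality hypotheses in real form
  have hner : ∀ (E : Set Ω), μ[E|A] ≠ μ E →
      (μ (A ∩ E)).toReal ≠ a * (μ E).toReal := by
    intro E hne heq
    apply hne
    rw [cond_apply hA]
    have hfin : (μ A)⁻¹ * μ (A ∩ E) ≠ ⊤ :=
      ENNReal.mul_ne_top (ENNReal.inv_ne_top.2 hA0.ne') (measure_ne_top _ _)
    rw [← ENNReal.toReal_eq_toReal_iff' hfin (measure_ne_top _ _), ENNReal.toReal_mul,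
      ENNReal.toReal_inv, ← ha_def]
    field_simp [ha0.ne']
    linarith [heq]
  have hne1r : p1 ≠ a * e1 := hner E₁ hne1
  have hne2r : p2 ≠ a * e2 := hner E₂ hne2
  have hb' : b = 1 - a := by linarith
  rw [← hs1] at hne1r
  rw [← hs2] at hne2r
  rw [← hs1, ← hs2] at hs12
  rw [hb'] at h2
  have key : (p1 - a * (p1 + q1)) * (p2 - a * (p2 + q2)) = 0 := by
    linear_combination (a - 1) * h1 + (-a) * h2 + (a * (1 - a)) * hs12
  rcases mul_eq_zero.1 key with hk | hk
  · exact hne1r (by linarith)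
  · exact hne2r (by linarith)
end

section
/- Let p be a prime and G = ℤ/p²ℤ. Define c_G(g) to be the p-adic-additive valuation-based discriminant exponent: c_G(g) = p² − p if g has order p, c_G(g) = p² − 1 if g has order p², and c_G(1) = 0. Then the minimum-value set 𝔐 = {g : c_G(g) = p² − p} equals the subgroup pℤ/p²ℤ minus the identity, and 𝔐 ∩ G_{p²} = 𝔐 does not generate G_{p²} = G. Hence the discriminant counting function on ℤ/p²ℤ is not fair. -/
/-- Unfairness of the discriminant counting function on `G = ℤ/p²ℤ`: for the discriminant
exponent function `c` (`c g = p² − p` for `g` of order `p`, `c g = p² − 1` for `g` of order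
`p²`, `c 1 = 0`), the minimum-value set `𝔐 = {g : c g = p² − p}` is exactly the subgroup
`pℤ/p²ℤ` minus the identity, and `𝔐` does not generate `G_{p²} = G`. -/
theorem stmt10 (p : ℕ) (hp : p.Prime) (c : ZMod (p ^ 2) → ℕ)
    (hc0 : c 0 = 0)
    (hcp : ∀ g : ZMod (p ^ 2), addOrderOf g = p → c g = p ^ 2 - p)
    (hcp2 : ∀ g : ZMod (p ^ 2), addOrderOf g = p ^ 2 → c g = p ^ 2 - 1) :
    {g : ZMod (p ^ 2) | c g = p ^ 2 - p} =
      ((AddSubgroup.zmultiples (p : ZMod (p ^ 2)) : Set (ZMod (p ^ 2))) \ {0}) ∧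
    AddSubgroup.closure {g : ZMod (p ^ 2) | c g = p ^ 2 - p} ≠ ⊤ := by
  have hp1 : 1 < p := hp.one_lt
  haveI : NeZero (p ^ 2) := ⟨by positivity⟩
  have hpp : (p : ZMod (p ^ 2)) * p = 0 := by
    have : ((p ^ 2 : ℕ) : ZMod (p ^ 2)) = 0 := ZMod.natCast_self _
    push_cast at this
    linear_combination this
  have hpne : (p : ZMod (p ^ 2)) ≠ 0 := by
    intro h
    have hd := (ZMod.natCast_eq_zero_iff p (p ^ 2)).mp h
    have := Nat.le_of_dvd hp.pos hd
    nlinarith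
  -- order-p elements are exactly nonzero multiples of p
  have key : ∀ g : ZMod (p ^ 2),
      (g ∈ AddSubgroup.zmultiples (p : ZMod (p ^ 2)) ∧ g ≠ 0) ↔ addOrderOf g = p := by
    intro g
    constructor
    · rintro ⟨hg, hne⟩
      obtain ⟨k, hk⟩ := AddSubgroup.mem_zmultiples_iff.mp hg
      rw [zsmul_eq_mul] at hk
      have hord : addOrderOf g ∣ p := by
        apply addOrderOf_dvd_of_nsmul_eq_zero
        rw [nsmul_eq_mul, ← hk]
        linear_combination (k : ZMod (p ^ 2)) * hpp
      rcases (Nat.dvd_prime hp).mp hord with h1 | h1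
      · exact absurd (AddMonoid.addOrderOf_eq_one_iff.mp h1) hne
      · exact h1
    · intro hord
      constructor
      · have hg : p • g = 0 := by
          have h0 : addOrderOf g • g = 0 := addOrderOf_nsmul_eq_zero g
          rwa [hord] at h0
        have hval : ((p * g.val : ℕ) : ZMod (p ^ 2)) = 0 := by
          push_cast
          rw [ZMod.natCast_val, ZMod.cast_id]
          simpa [nsmul_eq_mul] using hg
        have hdvd : p ^ 2 ∣ p * g.val := (ZMod.natCast_eq_zero_iff _ _).mp hval
        obtain ⟨m, hm⟩ : p ∣ g.val := by
          obtain ⟨k, hk⟩ := hdvd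
          refine ⟨k, ?_⟩
          have : p * g.val = p * (p * k) := by rw [hk]; ring
          exact Nat.eq_of_mul_eq_mul_left hp.pos this
        refine AddSubgroup.mem_zmultiples_iff.mpr ⟨(m : ℤ), ?_⟩
        have hg' : g = ((g.val : ℕ) : ZMod (p ^ 2)) := by
          rw [ZMod.natCast_val, ZMod.cast_id]
        rw [hg', hm, zsmul_eq_mul]
        push_cast
        ring
      · intro h
        rw [h, addOrderOf_zero] at hord
        omega
  have hset : {g : ZMod (p ^ 2) | c g = p ^ 2 - p} =
      ((AddSubgroup.zmultiples (p : ZMod (p ^ 2)) : Set (ZMod (p ^ 2))) \ {0}) := by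
    ext g
    simp only [Set.mem_setOf_eq, Set.mem_diff, Set.mem_singleton_iff, SetLike.mem_coe]
    constructor
    · intro hcg
      have hdvd : addOrderOf g ∣ p ^ 2 := by
        have := addOrderOf_dvd_card (x := g)
        rwa [ZMod.card] at this
      obtain ⟨i, hi, he⟩ := (Nat.dvd_prime_pow hp).mp hdvd
      interval_cases i
      · simp only [pow_zero] at he
        have hg0 : g = 0 := AddMonoid.addOrderOf_eq_one_iff.mp he
        rw [hg0, hc0] at hcg
        have : p < p ^ 2 := by nlinarith
        omega
      · simp only [pow_one] at he
        exact (key g).mpr he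
      · rw [hcp2 g he] at hcg
        have : p < p ^ 2 := by nlinarith
        omega
    · intro hg
      exact hcp g ((key g).mp hg)
  refine ⟨hset, ?_⟩
  intro htop
  have hle : AddSubgroup.closure {g : ZMod (p ^ 2) | c g = p ^ 2 - p} ≤
      AddSubgroup.zmultiples (p : ZMod (p ^ 2)) := by
    apply AddSubgroup.closure_le _ |>.mpr
    rw [hset]
    exact fun x hx => hx.1
  have h1 : (1 : ZMod (p ^ 2)) ∈ AddSubgroup.zmultiples (p : ZMod (p ^ 2)) := by
    apply hle
    rw [htop]
    trivial
  obtain ⟨k, hk⟩ := AddSubgroup.mem_zmultiples_iff.mp h1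
  have : (p : ZMod (p ^ 2)) = (p : ZMod (p ^ 2)) * 1 := by ring
  rw [this, ← hk, zsmul_eq_mul] at hpne
  apply hpne
  linear_combination (k : ZMod (p ^ 2)) * hpp
end

section
/- Let G be a finite abelian group of exponent dividing N and let c_G be induced by the Artin conductor of the representation ⊕_i f_i, where G = ∏_{i=1}^k ℤ/n_iℤ and f_i : G → ℂ^× is the projection onto the i-th factor composed with an injective character. Then c_G(g) = #{i : g_i ≠ 0}, the minimum m equals 1, 𝔐 is the set of elements with exactly one nonzero coordinate, and for every r the set 𝔐 ∩ G_r generates G_r; i.e., this Artin conductor is a fair counting function. -/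
/-- Fairness of the Artin conductor of `⊕ᵢ fᵢ` on `G = ∏ᵢ ℤ/nᵢℤ`, where `fᵢ` is the `i`-th
projection composed with an injective character: the conductor exponent is
`c g = #{i : gᵢ ≠ 0}`, its nonzero minimum is `m = 1`, the minimum set `𝔐 = {g : c g = 1}` is
the set of elements with exactly one nonzero coordinate, and for every `r` the set `𝔐 ∩ G_r`
generates the `r`-torsion subgroup `G_r`. -/
theorem stmt11 (k : ℕ) (hk : 0 < k) (n : Fin k → ℕ) (hn : ∀ i, 2 ≤ n i)
    (c : (∀ i, ZMod (n i)) → ℕ)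
    (hc : ∀ g, c g = (Finset.univ.filter fun i => g i ≠ 0).card) :
    IsLeast {m : ℕ | ∃ g : ∀ i, ZMod (n i), g ≠ 0 ∧ c g = m} 1 ∧
    ({g : ∀ i, ZMod (n i) | c g = 1} =
      {g : ∀ i, ZMod (n i) | ∃ i, g i ≠ 0 ∧ ∀ j, j ≠ i → g j = 0}) ∧
    (∀ r : ℕ,
      AddSubgroup.closure
          ({g : ∀ i, ZMod (n i) | c g = 1} ∩ {g : ∀ i, ZMod (n i) | r • g = 0}) =
        AddSubgroup.closure {g : ∀ i, ZMod (n i) | r • g = 0}) := by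
  haveI : ∀ i, Fact (1 < n i) := fun i => ⟨hn i⟩
  -- helper: c of a single with nonzero value is 1
  have hsingle : ∀ (i : Fin k) (x : ZMod (n i)), x ≠ 0 → c (Pi.single i x) = 1 := by
    intro i x hx
    rw [hc]
    rw [Finset.card_eq_one]
    refine ⟨i, ?_⟩
    ext j
    simp only [Finset.mem_filter, Finset.mem_univ, true_and, Finset.mem_singleton]
    constructor
    · intro hj
      by_contra hji
      exact hj (Pi.single_eq_of_ne (M := fun i => ZMod (n i)) hji x)
    · rintro rfl; simpa using hx
  refine ⟨⟨⟨Pi.single ⟨0, hk⟩ 1, ?_, hsingle _ 1 one_ne_zero⟩, ?_⟩, ?_, ?_⟩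
  · intro h
    have := congrFun h ⟨0, hk⟩
    simp at this
  · rintro m ⟨g, hg, rfl⟩
    rw [hc]
    obtain ⟨i, hi⟩ := Function.ne_iff.mp hg
    refine Finset.card_pos.mpr ⟨i, ?_⟩
    simpa using hi
  · ext g
    simp only [Set.mem_setOf_eq, hc, Finset.card_eq_one]
    constructor
    · rintro ⟨i, hi⟩
      refine ⟨i, ?_, ?_⟩
      · have : i ∈ Finset.univ.filter fun j => g j ≠ 0 := by rw [hi]; simp
        simpa using this
      · intro j hj
        by_contra hgj
        have : j ∈ Finset.univ.filter fun j => g j ≠ 0 := by simp [hgj]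
        rw [hi] at this
        exact hj (Finset.mem_singleton.mp this)
    · rintro ⟨i, hi, hj⟩
      refine ⟨i, ?_⟩
      ext j
      simp only [Finset.mem_filter, Finset.mem_univ, true_and, Finset.mem_singleton]
      constructor
      · intro h; by_contra hji; exact h (hj j hji)
      · rintro rfl; exact hi
  · intro r
    refine le_antisymm (AddSubgroup.closure_mono Set.inter_subset_right) ?_
    rw [AddSubgroup.closure_le]
    intro g hg
    have hgr : r • g = 0 := hg
    have : g = ∑ i, Pi.single i (g i) := (Finset.univ_sum_single g).symm
    rw [this]
    refine AddSubgroup.sum_mem _ fun i _ => ?_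
    by_cases h : g i = 0
    · rw [h, Pi.single_zero]; exact zero_mem _
    · have h1 : c (Pi.single i (g i)) = 1 := hsingle i (g i) h
      have h2 : r • (Pi.single i (g i) : ∀ j, ZMod (n j)) = 0 := by
        have hgi : r • g i = 0 := congrFun hgr i
        ext j
        by_cases hji : j = i
        · subst hji; simp [hgi]
        · simp [Pi.single_eq_of_ne (M := fun i => ZMod (n i)) hji]
      exact AddSubgroup.subset_closure ⟨h1, h2⟩
end

section
/- Let G = ∏_{i=1}^k ℤ/n_iℤ with projections f_i, viewed as characters, and consider the representation R = (⊗_i f_i) ⊕ (⊕_i f_i). For g ∈ G write c(g) = (k+1) − #{i : g_i = 0} − [Σ_i (images under f_i) trivial on g], i.e., c(g) counts the f_i and ⊗f_i not killing g. Then every element of G with exactly one nonzero coordinate lies in 𝔐 = c^{-1}(min_{g≠1} c(g)), and hence for all r the set 𝔐 ∩ G_r generates G_r (the Artin conductor of R is fair). -/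
/-- Fairness of the Artin conductor of `(⊗ᵢ fᵢ) ⊕ (⊕ᵢ fᵢ)` on `G = ∏ᵢ ℤ/nᵢℤ`: with
`χ g = Σᵢ gᵢ/nᵢ ∈ ℚ/ℤ` the character `⊗ᵢ fᵢ`, the conductor exponent is
`c g = #{i : gᵢ ≠ 0} + (1 if χ g ≠ 0 else 0)`; every element with exactly one nonzero
coordinate lies in the minimum set `𝔐`, and hence for all `r` the set `𝔐 ∩ G_r` generates the
`r`-torsion subgroup `G_r`. -/
theorem stmt12 (k : ℕ) (hk : 0 < k) (n : Fin k → ℕ) (hn : ∀ i, 2 ≤ n i)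
    (χ : (∀ i, ZMod (n i)) → AddCircle (1 : ℚ))
    (hχ : ∀ g, χ g = ∑ i, ((((g i).val : ℚ) / (n i : ℚ) : ℚ) : AddCircle (1 : ℚ)))
    (c : (∀ i, ZMod (n i)) → ℕ)
    (hc : ∀ g, c g =
      (Finset.univ.filter fun i => g i ≠ 0).card + (if χ g = 0 then 0 else 1)) :
    (∀ g : ∀ i, ZMod (n i), (∃ i, g i ≠ 0 ∧ ∀ j, j ≠ i → g j = 0) →
      g ≠ 0 ∧ ∀ h : ∀ i, ZMod (n i), h ≠ 0 → c g ≤ c h) ∧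
    (∀ r : ℕ,
      AddSubgroup.closure
          ({g : ∀ i, ZMod (n i) | g ≠ 0 ∧ ∀ h, h ≠ 0 → c g ≤ c h} ∩
            {g : ∀ i, ZMod (n i) | r • g = 0}) =
        AddSubgroup.closure {g : ∀ i, ZMod (n i) | r • g = 0}) := by
  haveI : ∀ i, NeZero (n i) := fun i => ⟨by have := hn i; omega⟩
  -- χ is nonzero on elements with exactly one nonzero coordinate
  have hχne : ∀ g : ∀ i, ZMod (n i), (∃ i, g i ≠ 0 ∧ ∀ j, j ≠ i → g j = 0) → χ g ≠ 0 := by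
    rintro g ⟨i, hi, hj⟩
    rw [hχ]
    have hsum : ∑ j, ((((g j).val : ℚ) / (n j : ℚ) : ℚ) : AddCircle (1 : ℚ))
        = ((((g i).val : ℚ) / (n i : ℚ) : ℚ) : AddCircle (1 : ℚ)) := by
      refine Finset.sum_eq_single i (fun j _ hji => ?_) (fun h => absurd (Finset.mem_univ i) h)
      rw [hj j hji]
      norm_num
    rw [hsum]
    intro h0
    obtain ⟨z, hz⟩ := (AddCircle.coe_eq_zero_iff (p := (1:ℚ))).mp h0
    have hvpos : 0 < (g i).val := by
      rcases Nat.eq_zero_or_pos (g i).val with h | h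
      · exact absurd ((ZMod.val_eq_zero (g i)).mp h) hi
      · exact h
    have hvlt : (g i).val < n i := (g i).val_lt
    have hnpos : (0:ℚ) < (n i : ℚ) := by exact_mod_cast (by omega : 0 < n i)
    have hq0 : (0:ℚ) < ((g i).val : ℚ) / (n i : ℚ) := by
      apply div_pos _ hnpos; exact_mod_cast hvpos
    have hq1 : ((g i).val : ℚ) / (n i : ℚ) < 1 := by
      rw [div_lt_one hnpos]; exact_mod_cast hvlt
    rw [zsmul_eq_mul, mul_one] at hz
    have h1 : (0:ℚ) < (z:ℚ) := hz ▸ hq0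
    have h2 : (z:ℚ) < 1 := hz ▸ hq1
    have : 0 < z := by exact_mod_cast h1
    have : (1:ℚ) ≤ (z:ℚ) := by exact_mod_cast this
    linarith
  -- c of a single-coordinate element is 2
  have hc2 : ∀ g : ∀ i, ZMod (n i), (∃ i, g i ≠ 0 ∧ ∀ j, j ≠ i → g j = 0) → c g = 2 := by
    rintro g hg
    obtain ⟨i, hi, hj⟩ := hg
    have hfilter : (Finset.univ.filter fun j => g j ≠ 0) = {i} := by
      ext j
      simp only [Finset.mem_filter, Finset.mem_univ, true_and, Finset.mem_singleton]
      constructor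
      · intro hgj; by_contra hji; exact hgj (hj j hji)
      · rintro rfl; exact hi
    rw [hc, hfilter, if_neg (hχne g ⟨i, hi, hj⟩)]
    simp
  -- c of any nonzero element is at least 2
  have hge2 : ∀ h : ∀ i, ZMod (n i), h ≠ 0 → 2 ≤ c h := by
    intro h hh
    have hne : (Finset.univ.filter fun j => h j ≠ 0).Nonempty := by
      by_contra hemp
      rw [Finset.not_nonempty_iff_eq_empty, Finset.filter_eq_empty_iff] at hemp
      apply hh
      funext j
      by_contra hj
      exact hemp (Finset.mem_univ j) hj
    have hcard : 1 ≤ (Finset.univ.filter fun j => h j ≠ 0).card :=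
      Finset.Nonempty.card_pos hne
    rcases Nat.lt_or_ge (Finset.univ.filter fun j => h j ≠ 0).card 2 with hlt | hge
    · -- exactly one nonzero coordinate
      have h1 : (Finset.univ.filter fun j => h j ≠ 0).card = 1 := by omega
      obtain ⟨i, hi⟩ := Finset.card_eq_one.mp h1
      have hmem : ∀ j, j ∈ (Finset.univ.filter fun j => h j ≠ 0) ↔ j = i := by
        intro j; rw [hi]; exact Finset.mem_singleton
      have hi' : h i ≠ 0 := by
        have := (hmem i).mpr rfl
        simpa using this
      have hj' : ∀ j, j ≠ i → h j = 0 := by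
        intro j hji
        by_contra hj
        exact hji ((hmem j).mp (by simpa using hj))
      rw [hc2 h ⟨i, hi', hj'⟩]
    · rw [hc h]; omega
  have main : ∀ g : ∀ i, ZMod (n i), (∃ i, g i ≠ 0 ∧ ∀ j, j ≠ i → g j = 0) →
      g ≠ 0 ∧ ∀ h : ∀ i, ZMod (n i), h ≠ 0 → c g ≤ c h := by
    rintro g hg
    obtain ⟨i, hi, -⟩ := id hg
    refine ⟨fun h0 => hi (by rw [h0]; rfl), fun h hh => ?_⟩
    rw [hc2 g hg]
    exact hge2 h hh
  refine ⟨main, fun r => ?_⟩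
  refine le_antisymm (AddSubgroup.closure_mono Set.inter_subset_right) ?_
  rw [AddSubgroup.closure_le]
  intro g hg
  simp only [Set.mem_setOf_eq] at hg
  have hgsum : g = ∑ i, Pi.single i (g i) := (Finset.univ_sum_single g).symm
  rw [hgsum]
  apply AddSubgroup.sum_mem
  intro i _
  by_cases hgi : g i = 0
  · rw [hgi, Pi.single_zero]
    exact AddSubgroup.zero_mem _
  · apply AddSubgroup.subset_closure
    have hsingle : ∃ j, (Pi.single i (g i) : ∀ i, ZMod (n i)) j ≠ 0 ∧
        ∀ l, l ≠ j → (Pi.single i (g i) : ∀ i, ZMod (n i)) l = 0 := by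
      refine ⟨i, by simpa using hgi, fun l hl => by simp [Pi.single_eq_of_ne hl]⟩
    refine ⟨main _ hsingle, ?_⟩
    show r • (Pi.single i (g i) : ∀ i, ZMod (n i)) = 0
    have hcoord : r • g i = 0 := by
      have := congrFun hg i
      simpa using this
    funext j
    by_cases hji : j = i
    · subst hji; simpa using hcoord
    · simp [Pi.single_eq_of_ne hji]
end

section
/- Let G be a finite abelian group and H a subgroup of index r. Let M be a Galois field extension of a field F with Galois group identified with H. Then the induced G-structured F-algebra Ind_H^G M is isomorphic as an F-algebra to M^{⊕ r}, and under the correspondence with homomorphisms G_F → G, Ind_H^G M corresponds to the composite G_F → Gal(M/F) ≅ H ⊂ G. -/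
open IntermediateField

/-- Induction of a Galois `H`-extension to a `G`-structured algebra: let `G` be a finite
abelian group, `H ≤ G` a subgroup of index `r`, and `M` a finite Galois extension of `F`
(inside an algebraic closure) whose Galois group is identified with `H` via `e`.  Let
`Ind = Ind_H^G M` be the induced algebra, consisting of functions `f : G → M` with
`f(hg) = e(h)(f(g))`.  Then `Ind` is isomorphic as an `F`-algebra to `M^{⊕ r}`, and under the
correspondence between `G`-structured algebras and homomorphisms `G_F → G`, `Ind` corresponds
to the composite `G_F → Gal(M/F) ≅ H ⊆ G`: the evaluation map `ψ : f ↦ f(1)` into the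
algebraic closure intertwines the absolute Galois action with the `G`-action through this
composite homomorphism. -/
theorem stmt19 (F : Type) [Field F] (G : Type) [CommGroup G] [Finite G] (H : Subgroup G)
    (M : IntermediateField F (AlgebraicClosure F)) [FiniteDimensional F M] [IsGalois F M]
    (e : H ≃* (M ≃ₐ[F] M))
    (Ind : Subalgebra F (G → M))
    (hInd : ∀ f : G → M, f ∈ Ind ↔ ∀ (h : H) (g : G), f ((h : G) * g) = e h (f g)) :
    Nonempty (Ind ≃ₐ[F] (Fin H.index → M)) ∧
    ∀ (σ : AlgebraicClosure F ≃ₐ[F] AlgebraicClosure F) (f : Ind),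
      σ ((f.1 1 : M) : AlgebraicClosure F) =
        ((f.1 ((e.symm (AlgEquiv.restrictNormalHom M σ) : H) : G) : M) :
          AlgebraicClosure F) := by
  have mem : ∀ g : G, g * ((QuotientGroup.mk g : G ⧸ H)).out⁻¹ ∈ H := by
    intro g
    have h1 : (QuotientGroup.mk ((QuotientGroup.mk g : G ⧸ H)).out : G ⧸ H) =
        QuotientGroup.mk g := QuotientGroup.out_eq' _
    have h2 := (QuotientGroup.eq).mp h1
    rwa [mul_comm] at h2
  set φ : G → H := fun g => ⟨_, mem g⟩ with hφ
  have hmk : ∀ (h : H) (g : G),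
      (QuotientGroup.mk ((h : G) * g) : G ⧸ H) = QuotientGroup.mk g := by
    intro h g
    rw [QuotientGroup.eq]
    have : ((h : G) * g)⁻¹ * g = (h : G)⁻¹ := by
      rw [mul_inv_rev, mul_right_comm, inv_mul_cancel, one_mul]
    rw [this]
    exact H.inv_mem h.2
  have hφmul : ∀ (h : H) (g : G), φ ((h : G) * g) = h * φ g := by
    intro h g
    ext
    show (h : G) * g * ((QuotientGroup.mk ((h : G) * g) : G ⧸ H)).out⁻¹ =
      (h : G) * (g * ((QuotientGroup.mk g : G ⧸ H)).out⁻¹)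
    rw [hmk h g, mul_assoc]
  have key : ∀ (f : G → M), f ∈ Ind → ∀ g : G,
      f g = e (φ g) (f ((QuotientGroup.mk g : G ⧸ H)).out) := by
    intro f hf g
    have h3 := (hInd f).mp hf (φ g) ((QuotientGroup.mk g : G ⧸ H)).out
    rw [← h3]
    congr 1
    show g = g * ((QuotientGroup.mk g : G ⧸ H)).out⁻¹ * ((QuotientGroup.mk g : G ⧸ H)).out
    rw [inv_mul_cancel_right]
  constructor
  · let E := Finite.equivFin (G ⧸ H)
    let rep : Fin H.index → G := fun i => (E.symm i).out
    have hrepout : ∀ i, ((QuotientGroup.mk (rep i) : G ⧸ H)) = E.symm i :=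
      fun i => QuotientGroup.out_eq' _
    let Φ : Ind →ₐ[F] (Fin H.index → M) :=
      Pi.algHom _ _ (fun i => (Pi.evalAlgHom F (fun _ => M) (rep i)).comp Ind.val)
    have hΦ : ∀ (f : Ind) (i : Fin H.index), Φ f i = f.1 (rep i) := fun _ _ => rfl
    have hφrep : ∀ i, φ (rep i) = 1 := by
      intro i
      ext
      show rep i * ((QuotientGroup.mk (rep i) : G ⧸ H)).out⁻¹ = 1
      rw [hrepout i]
      exact mul_inv_cancel _
    refine ⟨AlgEquiv.ofBijective Φ ⟨?_, ?_⟩⟩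
    · intro f₁ f₂ h
      ext g
      rw [key f₁.1 f₁.2 g, key f₂.1 f₂.2 g]
      have h4 := congrFun h (E (QuotientGroup.mk g))
      erw [hΦ, hΦ] at h4
      have hre : rep (E (QuotientGroup.mk g)) = ((QuotientGroup.mk g : G ⧸ H)).out := by
        simp only [rep, Equiv.symm_apply_apply]
      rw [hre] at h4
      rw [h4]
    · intro v
      set f : G → M := fun g => e (φ g) (v (E (QuotientGroup.mk g))) with hf
      have hfInd : f ∈ Ind := by
        rw [hInd]
        intro h g
        show e (φ ((h : G) * g)) (v (E (QuotientGroup.mk ((h : G) * g)))) =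
          e h (e (φ g) (v (E (QuotientGroup.mk g))))
        rw [hmk h g, hφmul h g, map_mul]
        rfl
      refine ⟨⟨f, hfInd⟩, funext fun i => ?_⟩
      rw [hΦ]
      show e (φ (rep i)) (v (E (QuotientGroup.mk (rep i)))) = v i
      erw [hφrep i, hrepout i, map_one, Equiv.apply_symm_apply]
      exact congrArg v (E.apply_symm_apply i)
  · intro σ f
    have h1 := (hInd f.1).mp f.2 (e.symm (AlgEquiv.restrictNormalHom M σ)) 1
    rw [mul_one] at h1
    rw [h1, MulEquiv.apply_symm_apply]
    exact (AlgEquiv.restrictNormal_commutes σ M (f.1 1)).symm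
end
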